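/- arXiv:math/0512568 — 6 statements merged into one kernel-verified Lean document; each statement's English description precedes it below -/
import Mathlib

section
/- Let S be a commutative semigroup with zero element 0, let x be a vertex of the zero-divisor graph Γ(S), and suppose x is adjacent in Γ(S) to at least one end vertex. If Γ(S) contains a cycle, then {0, x} is a sub-semigroup of S; that is, x·x = 0 or x·x = x. -/
universe u v w
/-- A commutative semigroup with a zero element `0` satisfying `0 * a = 0`. -/
class CommSemigroupWithZero (S : Type u) extends CommSemigroup S, Zero S where
  zero_mul' : ∀ a : S, 0 * a = 0

/-- The zero-divisor graph of `S`, as a simple graph on all of `S`: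
distinct nonzero `x, y` are adjacent iff `x * y = 0`.  (The element `0` and the
non-zero-divisors are isolated vertices, so adjacency, end vertices and cycles
are exactly those of `Γ(S)`.) -/
def zdGraph (S : Type u) [CommSemigroupWithZero S] : SimpleGraph S where
  Adj x y := x ≠ y ∧ x * y = 0 ∧ x ≠ 0 ∧ y ≠ 0
  symm := ⟨by
    rintro x y ⟨h1, h2, h3, h4⟩
    exact ⟨h1.symm, by rwa [mul_comm], h4, h3⟩⟩
  loopless := ⟨fun x h => h.1 rfl⟩

/-- `x` is a vertex of `Γ(S)`: a nonzero zero-divisor. -/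
def IsVertex (S : Type u) [CommSemigroupWithZero S] (x : S) : Prop :=
  x ≠ 0 ∧ ∃ y : S, y ≠ 0 ∧ x * y = 0

/-- `x` is an end vertex of `Γ(S)`: it has exactly one neighbour. -/
def IsEndVertex (S : Type u) [CommSemigroupWithZero S] (x : S) : Prop :=
  ∃! y : S, (zdGraph S).Adj x y

/-- Corollary 2.2 (second part): if the vertex `x` is adjacent to an end vertex and
`Γ(S)` has a cycle, then `{0, x}` is a sub-semigroup, i.e. `x * x = 0` or `x * x = x`. -/
theorem stmt2 (S : Type u) [CommSemigroupWithZero S] (x : S) (hx : IsVertex S x)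
    (hend : ∃ y : S, IsEndVertex S y ∧ (zdGraph S).Adj x y)
    (hcyc : ¬ (zdGraph S).IsAcyclic) :
    x * x = 0 ∨ x * x = x := by
  by_contra hcon
  push_neg at hcon
  obtain ⟨hxx0, hxxx⟩ := hcon
  obtain ⟨y, hy, hadj⟩ := hend
  obtain ⟨hxy, hmul, hx0, hy0⟩ := id hadj
  have zmul : ∀ a : S, (0:S) * a = 0 := CommSemigroupWithZero.zero_mul'
  have mul0 : ∀ a : S, a * 0 = (0:S) := fun a => by rw [mul_comm]; exact zmul a
  have hadjyx : (zdGraph S).Adj y x := hadj.symm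
  -- Step 1: x * x = y
  have hx2y : x * x = y := by
    by_contra h
    have hadj' : (zdGraph S).Adj y (x * x) := by
      refine ⟨fun he => h he.symm, ?_, hy0, hxx0⟩
      rw [mul_comm, mul_assoc, hmul, mul0]
    exact hxxx (hy.unique hadj' hadjyx)
  have hyy : y * y = 0 := by
    calc y * y = (x * x) * y := by rw [hx2y]
      _ = x * (x * y) := mul_assoc x x y
      _ = 0 := by rw [hmul, mul0]
  -- Step 2: any nonzero z with z * y = 0 is x or y
  have lemA : ∀ z : S, z ≠ 0 → z * y = 0 → z = x ∨ z = y := by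
    intro z hz hzy
    by_cases h : z = y
    · exact Or.inr h
    · refine Or.inl (hy.unique ?_ hadjyx)
      exact ⟨fun he => h he.symm, by rw [mul_comm]; exact hzy, hy0, hz⟩
  -- Step 3: for any a, a * y = 0 or a * y = y
  have lemB : ∀ a : S, a * y = 0 ∨ a * y = y := by
    intro a
    by_cases h0 : a * y = 0
    · exact Or.inl h0
    · refine Or.inr ?_
      have h1 : (a * y) * y = 0 := by rw [mul_assoc, hyy, mul0]
      rcases lemA (a * y) h0 h1 with h | h
      · exfalso
        apply hxx0
        calc x * x = x * (a * y) := by rw [h]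
          _ = a * (x * y) := by rw [mul_left_comm]
          _ = 0 := by rw [hmul, mul0]
      · exact h
  -- Step 4: every edge of the graph contains x
  have star : ∀ a b : S, (zdGraph S).Adj a b → a = x ∨ b = x := by
    rintro a b ⟨hab, hab0, ha0, hb0⟩
    by_contra h
    push_neg at h
    obtain ⟨hax, hbx⟩ := h
    have key : ∀ c d : S, c ≠ d → c * d = 0 → c ≠ 0 → d ≠ 0 → c ≠ x → d ≠ x →
        c * y = y := by
      intro c d hcd hcd0 hc0 hd0 hcx hdx
      rcases lemB c with h | h
      · exfalso
        rcases lemA c hc0 h with h' | h'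
        · exact hcx h'
        · -- c = y, so d is a neighbour of y
          have hdy : d * y = 0 := by rw [← h', mul_comm]; exact hcd0
          rcases lemA d hd0 hdy with h'' | h''
          · exact hdx h''
          · exact hcd (h'.trans h''.symm)
      · exact h
    have hay : a * y = y := key a b hab hab0 ha0 hb0 hax hbx
    have hby : b * y = y := by
      refine key b a (fun he => hab he.symm) ?_ hb0 ha0 hbx hax
      rw [mul_comm]; exact hab0
    apply hy0
    calc y = a * y := hay.symm
      _ = a * (b * y) := by rw [hby]
      _ = (a * b) * y := (mul_assoc a b y).symm
      _ = 0 := by rw [hab0, zmul]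
  -- Step 5: a star graph is acyclic, contradicting hcyc
  apply hcyc
  intro v c hc
  cases c with
  | nil => simp [SimpleGraph.Walk.IsCycle] at hc
  | cons h1 p =>
    cases p with
    | nil => exact h1.1 rfl
    | cons h2 q =>
      cases q with
      | nil =>
        have := hc.three_le_length
        simp at this
      | cons h3 r =>
        rename_i a b d
        have hnd := hc.support_nodup
        simp only [SimpleGraph.Walk.support_cons, List.tail_cons, List.nodup_cons,
          List.mem_cons] at hnd
        obtain ⟨ha, hb, _⟩ := hnd
        have hdmem : d ∈ r.support := r.start_mem_support
        have hvmem : v ∈ r.support := r.end_mem_support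
        rcases star _ _ h2 with hax | hbx
        · rcases star _ _ h3 with hbx | hdx
          · exact h2.1 (hax.trans hbx.symm)
          · exact ha (Or.inr (by rw [hax.trans hdx.symm]; exact hdmem))
        · rcases star _ _ h1 with hvx | hax
          · exact hb (by rw [hbx.trans hvx.symm]; exact hvmem)
          · exact h2.1 (hax.trans hbx.symm)
end

section
/- Let G₀ be the graph with vertex set {a₁, a₂, a₃, x₁, x₂} and edges a₁a₂, a₁a₃, a₂a₃, a₁x₁, a₂x₂, x₁x₂. Let U and V be disjoint (possibly empty, possibly infinite) sets disjoint from V(G₀), and let H be the graph obtained from G₀ by adjoining every u ∈ U as an end vertex adjacent to a₁ and every v ∈ V as an end vertex adjacent to a₂. Then there is exactly one binary operation · on the set V(H) ∪ {0} making it a commutative semigroup with zero element 0 whose zero-divisor graph is H, i.e., such that for distinct p, q ∈ V(H) one has p·q = 0 if and only if p and q are adjacent in H. -/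
universe u v w
/-- The edge relation of the base graph `G₀` on vertices `a₁ = 0, a₂ = 1, a₃ = 2,
x₁ = 3, x₂ = 4` (oriented version). Edges: a₁a₂, a₁a₃, a₂a₃, a₁x₁, a₂x₂, x₁x₂. -/
def eAdj (i j : Fin 5) : Prop :=
  (i = 0 ∧ j = 1) ∨ (i = 0 ∧ j = 2) ∨ (i = 1 ∧ j = 2) ∨
  (i = 0 ∧ j = 3) ∨ (i = 1 ∧ j = 4) ∨ (i = 3 ∧ j = 4)

/-- The (symmetrized) adjacency relation of `G₀`. -/
def baseAdj (i j : Fin 5) : Prop := eAdj i j ∨ eAdj j i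

/-- Adjacency of the graph `H` obtained from `G₀` by attaching every `u ∈ U` as an end
vertex adjacent to `a₁` and every `v ∈ V` as an end vertex adjacent to `a₂`. -/
def HAdj (U V : Type u) : Fin 5 ⊕ U ⊕ V → Fin 5 ⊕ U ⊕ V → Prop
  | Sum.inl i, Sum.inl j => baseAdj i j
  | Sum.inl i, Sum.inr (Sum.inl _) => i = 0
  | Sum.inl i, Sum.inr (Sum.inr _) => i = 1
  | Sum.inr (Sum.inl _), Sum.inl i => i = 0
  | Sum.inr (Sum.inr _), Sum.inl i => i = 1
  | Sum.inr _, Sum.inr _ => False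

/- ------------------ auxiliary development ------------------ -/

instance (i j : Fin 5) : Decidable (eAdj i j) := by unfold eAdj; infer_instance
instance (i j : Fin 5) : Decidable (baseAdj i j) := by unfold baseAdj; infer_instance

def ι57 : Fin 5 → Fin 7 := Fin.castLE (by omega)

def τmap {U V : Type u} : Fin 5 ⊕ U ⊕ V → Fin 7
  | Sum.inl i => ι57 i
  | Sum.inr (Sum.inl _) => 5
  | Sum.inr (Sum.inr _) => 6

def μtab : Fin 7 → Fin 7 → Option (Fin 5) :=
  ![![none, none, none, none, some 0, none, some 0],
    ![none, none, none, some 1, none, some 1, none],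
    ![none, none, none, some 1, some 0, some 1, some 0],
    ![none, some 1, some 1, some 3, none, some 3, some 1],
    ![some 0, none, some 0, none, some 4, some 0, some 4],
    ![none, some 1, some 1, some 3, some 0, some 3, some 2],
    ![some 0, none, some 0, some 1, some 4, some 2, some 4]]

def mmodel {U V : Type u} :
    Option (Fin 5 ⊕ U ⊕ V) → Option (Fin 5 ⊕ U ⊕ V) → Option (Fin 5 ⊕ U ⊕ V)
  | some p, some q => (μtab (τmap p) (τmap q)).map Sum.inl
  | _, _ => none

lemma μcomm : ∀ i j, μtab i j = μtab j i := by decide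

lemma μassoc : ∀ i j k : Fin 7,
    (μtab i j).bind (fun x => μtab (ι57 x) k) =
    (μtab j k).bind (fun y => μtab i (ι57 y)) := by decide

lemma lem_base : ∀ i j : Fin 5, i ≠ j → (μtab (ι57 i) (ι57 j) = none ↔ baseAdj i j) := by
  decide

lemma lem_u : ∀ i : Fin 5, μtab (ι57 i) 5 = none ↔ i = 0 := by decide
lemma lem_v : ∀ i : Fin 5, μtab (ι57 i) 6 = none ↔ i = 1 := by decide
lemma lem_u' : ∀ j : Fin 5, μtab 5 (ι57 j) = none ↔ j = 0 := by decide
lemma lem_v' : ∀ j : Fin 5, μtab 6 (ι57 j) = none ↔ j = 1 := by decide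

lemma mz {U V : Type u} : ∀ b, mmodel (U := U) (V := V) none b = none := fun b => by
  cases b <;> rfl

lemma mz' {U V : Type u} : ∀ a, mmodel (U := U) (V := V) a none = none := fun a => by
  cases a <;> rfl

lemma mleft {U V : Type u} (o : Option (Fin 5)) (r : Fin 5 ⊕ U ⊕ V) :
    mmodel (o.map Sum.inl) (some r) =
      (o.bind fun x => μtab (ι57 x) (τmap r)).map Sum.inl := by
  cases o <;> rfl

lemma mright {U V : Type u} (p : Fin 5 ⊕ U ⊕ V) (o : Option (Fin 5)) :
    mmodel (some p) (o.map Sum.inl) =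
      (o.bind fun y => μtab (τmap p) (ι57 y)).map Sum.inl := by
  cases o <;> rfl

section Pins

variable {U V : Type u} {w : Fin 5 ⊕ U ⊕ V}

lemma pinA2 (h1 : w = Sum.inl 0 ∨ HAdj U V w (Sum.inl 0))
    (h2 : w = Sum.inl 1 ∨ HAdj U V w (Sum.inl 1))
    (h3 : w = Sum.inl 4 ∨ HAdj U V w (Sum.inl 4)) : w = Sum.inl 1 := by
  rcases w with i | u | v
  · fin_cases i <;> simp_all [HAdj, baseAdj, eAdj]
  · simp_all [HAdj, baseAdj, eAdj]
  · simp_all [HAdj, baseAdj, eAdj]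

lemma pinA1 (h1 : w = Sum.inl 0 ∨ HAdj U V w (Sum.inl 0))
    (h2 : w = Sum.inl 1 ∨ HAdj U V w (Sum.inl 1))
    (h3 : w = Sum.inl 3 ∨ HAdj U V w (Sum.inl 3)) : w = Sum.inl 0 := by
  rcases w with i | u | v
  · fin_cases i <;> simp_all [HAdj, baseAdj, eAdj]
  · simp_all [HAdj, baseAdj, eAdj]
  · simp_all [HAdj, baseAdj, eAdj]

lemma pin0 (h1 : w = Sum.inl 0 ∨ HAdj U V w (Sum.inl 0))
    (h2 : w = Sum.inl 1 ∨ HAdj U V w (Sum.inl 1))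
    (h3 : w = Sum.inl 3 ∨ HAdj U V w (Sum.inl 3))
    (h4 : w = Sum.inl 4 ∨ HAdj U V w (Sum.inl 4)) : False := by
  rcases w with i | u | v
  · fin_cases i <;> simp_all [HAdj, baseAdj, eAdj]
  · simp_all [HAdj, baseAdj, eAdj]
  · simp_all [HAdj, baseAdj, eAdj]

lemma pinP8 (h1 : w = Sum.inl 1 ∨ HAdj U V w (Sum.inl 1))
    (h2 : w = Sum.inl 2 ∨ HAdj U V w (Sum.inl 2))
    (h3 : w = Sum.inl 3 ∨ HAdj U V w (Sum.inl 3)) : w = Sum.inl 0 := by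
  rcases w with i | u | v
  · fin_cases i <;> simp_all [HAdj, baseAdj, eAdj]
  · simp_all [HAdj, baseAdj, eAdj]
  · simp_all [HAdj, baseAdj, eAdj]

lemma pinP9 (h1 : w = Sum.inl 0 ∨ HAdj U V w (Sum.inl 0))
    (h2 : w = Sum.inl 2 ∨ HAdj U V w (Sum.inl 2))
    (h3 : w = Sum.inl 4 ∨ HAdj U V w (Sum.inl 4)) : w = Sum.inl 1 := by
  rcases w with i | u | v
  · fin_cases i <;> simp_all [HAdj, baseAdj, eAdj]
  · simp_all [HAdj, baseAdj, eAdj]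
  · simp_all [HAdj, baseAdj, eAdj]

lemma pin2 (h1 : w = Sum.inl 0 ∨ HAdj U V w (Sum.inl 0))
    (h2 : w = Sum.inl 4 ∨ HAdj U V w (Sum.inl 4)) :
    w = Sum.inl 1 ∨ w = Sum.inl 3 := by
  rcases w with i | u | v
  · fin_cases i <;> simp_all [HAdj, baseAdj, eAdj]
  · simp_all [HAdj, baseAdj, eAdj]
  · simp_all [HAdj, baseAdj, eAdj]

lemma pin2' (h1 : w = Sum.inl 1 ∨ HAdj U V w (Sum.inl 1))
    (h2 : w = Sum.inl 3 ∨ HAdj U V w (Sum.inl 3)) :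
    w = Sum.inl 0 ∨ w = Sum.inl 4 := by
  rcases w with i | u | v
  · fin_cases i <;> simp_all [HAdj, baseAdj, eAdj]
  · simp_all [HAdj, baseAdj, eAdj]
  · simp_all [HAdj, baseAdj, eAdj]

lemma pin3 (h1 : w = Sum.inl 0 ∨ HAdj U V w (Sum.inl 0))
    (h2 : w = Sum.inl 1 ∨ HAdj U V w (Sum.inl 1)) :
    w = Sum.inl 0 ∨ w = Sum.inl 1 ∨ w = Sum.inl 2 := by
  rcases w with i | u | v
  · fin_cases i <;> simp_all [HAdj, baseAdj, eAdj]
  · simp_all [HAdj, baseAdj, eAdj]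
  · simp_all [HAdj, baseAdj, eAdj]

end Pins

/-- Example 2.5(1): there is exactly one binary operation on `V(H) ∪ {0}` (modelled as
`Option (Fin 5 ⊕ U ⊕ V)`, with `none` playing the role of `0`) making it a commutative
semigroup with zero element `0` whose zero-divisor graph is `H`, i.e. such that for
distinct `p, q ∈ V(H)`, `p · q = 0` iff `p` and `q` are adjacent in `H`. -/
theorem stmt5 (U V : Type u) :
    ∃! m : Option (Fin 5 ⊕ U ⊕ V) → Option (Fin 5 ⊕ U ⊕ V) → Option (Fin 5 ⊕ U ⊕ V),
      (∀ a b, m a b = m b a) ∧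
      (∀ a b c, m (m a b) c = m a (m b c)) ∧
      (∀ a, m none a = none) ∧
      (∀ p q : Fin 5 ⊕ U ⊕ V, p ≠ q → (m (some p) (some q) = none ↔ HAdj U V p q)) := by
  refine ⟨mmodel, ⟨?_, ?_, ?_, ?_⟩, ?_⟩
  · -- commutativity
    intro a b
    rcases a with _ | p <;> rcases b with _ | q
    · rfl
    · rw [mz, mz']
    · rw [mz', mz]
    · show (μtab (τmap p) (τmap q)).map Sum.inl = (μtab (τmap q) (τmap p)).map Sum.inl
      rw [μcomm (τmap p) (τmap q)]
  · -- associativity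
    intro a b c
    rcases a with _ | p
    · simp only [mz]
    rcases b with _ | q
    · simp only [mz, mz']
    rcases c with _ | r
    · simp only [mz, mz']
    show mmodel ((μtab (τmap p) (τmap q)).map Sum.inl) (some r) =
        mmodel (some p) ((μtab (τmap q) (τmap r)).map Sum.inl)
    rw [mleft, mright]
    exact congrArg (Option.map Sum.inl) (μassoc (τmap p) (τmap q) (τmap r))
  · -- zero
    intro a; exact mz a
  · -- adjacency
    intro p q hpq
    have hmn : (mmodel (U := U) (V := V) (some p) (some q) = none) ↔
        μtab (τmap p) (τmap q) = none := by
      show ((μtab (τmap p) (τmap q)).map Sum.inl = none) ↔ _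
      exact Option.map_eq_none_iff
    rw [hmn]
    rcases p with i | u | v <;> rcases q with j | u' | v'
    · exact lem_base i j (fun h => hpq (congrArg Sum.inl h))
    · exact lem_u i
    · exact lem_v i
    · exact lem_u' j
    · exact iff_of_false (by show ¬ μtab 5 5 = none; decide) id
    · exact iff_of_false (by show ¬ μtab 5 6 = none; decide) id
    · exact lem_v' j
    · exact iff_of_false (by show ¬ μtab 6 5 = none; decide) id
    · exact iff_of_false (by show ¬ μtab 6 6 = none; decide) id
  · -- uniqueness
    intro m' hm'
    obtain ⟨hc, ha, hz, hiff⟩ := hm'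
    have hz' : ∀ a, m' a none = none := fun a => (hc a none).trans (hz a)
    have ccm : ∀ {p q : Fin 5 ⊕ U ⊕ V} {x}, m' (some p) (some q) = x →
        m' (some q) (some p) = x := fun h => (hc _ _).trans h
    have kill : ∀ (p q r : Fin 5 ⊕ U ⊕ V), m' (some q) (some r) = none →
        m' (m' (some p) (some q)) (some r) = none := fun p q r h =>
      (ha _ _ _).trans (by rw [h]; exact hz' _)
    have kill2 : ∀ (p q r : Fin 5 ⊕ U ⊕ V), m' (some p) (some r) = none →
        m' (m' (some p) (some q)) (some r) = none := fun p q r h =>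
      (congrArg (fun t => m' t (some r)) (hc (some p) (some q))).trans (kill q p r h)
    have killvia : ∀ (p q r w : Fin 5 ⊕ U ⊕ V), m' (some q) (some r) = some w →
        m' (some p) (some w) = none →
        m' (m' (some p) (some q)) (some r) = none := fun p q r w h1 h2 =>
      (ha _ _ _).trans (by rw [h1]; exact h2)
    have eqvia : ∀ (p q r w : Fin 5 ⊕ U ⊕ V), m' (some q) (some r) = some w →
        m' (m' (some p) (some q)) (some r) = m' (some p) (some w) := fun p q r w h1 =>
      (ha _ _ _).trans (by rw [h1])
    have memAnn : ∀ (w r : Fin 5 ⊕ U ⊕ V), m' (some w) (some r) = none →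
        w = r ∨ HAdj U V w r := fun w r h =>
      or_iff_not_imp_left.mpr fun hne => (hiff w r hne).1 h
    have hadj : ∀ p q, p ≠ q → HAdj U V p q → m' (some p) (some q) = none :=
      fun p q h1 h2 => (hiff p q h1).2 h2
    have hnz : ∀ p q, p ≠ q → ¬HAdj U V p q → m' (some p) (some q) ≠ none :=
      fun p q h1 h2 h3 => h2 ((hiff p q h1).1 h3)
    -- the given zero products
    have z12 : m' (some (.inl 0)) (some (.inl 1)) = none :=
      hadj _ _ (by simp) (by show baseAdj 0 1; decide)
    have z13 : m' (some (.inl 0)) (some (.inl 2)) = none :=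
      hadj _ _ (by simp) (by show baseAdj 0 2; decide)
    have z23 : m' (some (.inl 1)) (some (.inl 2)) = none :=
      hadj _ _ (by simp) (by show baseAdj 1 2; decide)
    have z14 : m' (some (.inl 0)) (some (.inl 3)) = none :=
      hadj _ _ (by simp) (by show baseAdj 0 3; decide)
    have z25 : m' (some (.inl 1)) (some (.inl 4)) = none :=
      hadj _ _ (by simp) (by show baseAdj 1 4; decide)
    have z45 : m' (some (.inl 3)) (some (.inl 4)) = none :=
      hadj _ _ (by simp) (by show baseAdj 3 4; decide)
    have zu : ∀ u : U, m' (some (.inl 0)) (some (.inr (.inl u))) = none :=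
      fun u => hadj _ _ (by simp) rfl
    have zv : ∀ v : V, m' (some (.inl 1)) (some (.inr (.inr v))) = none :=
      fun v => hadj _ _ (by simp) rfl
    -- step 1 : a3 · x1 = a2
    have s1 : m' (some (.inl 2)) (some (.inl 3)) = some (.inl 1) := by
      have t1 := kill2 (.inl 2) (.inl 3) (.inl 0) (ccm z13)
      have t2 := kill2 (.inl 2) (.inl 3) (.inl 1) (ccm z23)
      have t3 := kill (.inl 2) (.inl 3) (.inl 4) z45
      obtain ⟨w, hw⟩ := Option.ne_none_iff_exists'.mp
        (hnz (.inl 2) (.inl 3) (by simp) (by show ¬ baseAdj 2 3; decide))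
      rw [hw] at t1 t2 t3
      rw [pinA2 (memAnn _ _ t1) (memAnn _ _ t2) (memAnn _ _ t3)] at hw
      exact hw
    -- step 2 : a3 · x2 = a1
    have s2 : m' (some (.inl 2)) (some (.inl 4)) = some (.inl 0) := by
      have t1 := kill2 (.inl 2) (.inl 4) (.inl 0) (ccm z13)
      have t2 := kill (.inl 2) (.inl 4) (.inl 1) (ccm z25)
      have t3 := kill (.inl 2) (.inl 4) (.inl 3) (ccm z45)
      obtain ⟨w, hw⟩ := Option.ne_none_iff_exists'.mp
        (hnz (.inl 2) (.inl 4) (by simp) (by show ¬ baseAdj 2 4; decide))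
      rw [hw] at t1 t2 t3
      rw [pinA1 (memAnn _ _ t1) (memAnn _ _ t2) (memAnn _ _ t3)] at hw
      exact hw
    -- step 3 : x1 · v = a2
    have s3 : ∀ v : V, m' (some (.inl 3)) (some (.inr (.inr v))) = some (.inl 1) := by
      intro v
      have t1 := kill2 (.inl 3) (.inr (.inr v)) (.inl 0) (ccm z14)
      have t2 := kill (.inl 3) (.inr (.inr v)) (.inl 1) (ccm (zv v))
      have t3 := kill2 (.inl 3) (.inr (.inr v)) (.inl 4) z45
      obtain ⟨w, hw⟩ := Option.ne_none_iff_exists'.mp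
        (hnz (.inl 3) (.inr (.inr v)) (by simp) (by show ¬ ((3 : Fin 5) = 1); decide))
      rw [hw] at t1 t2 t3
      rw [pinA2 (memAnn _ _ t1) (memAnn _ _ t2) (memAnn _ _ t3)] at hw
      exact hw
    -- step 4 : x2 · u = a1
    have s4 : ∀ u : U, m' (some (.inl 4)) (some (.inr (.inl u))) = some (.inl 0) := by
      intro u
      have t1 := kill (.inl 4) (.inr (.inl u)) (.inl 0) (ccm (zu u))
      have t2 := kill2 (.inl 4) (.inr (.inl u)) (.inl 1) (ccm z25)
      have t3 := kill2 (.inl 4) (.inr (.inl u)) (.inl 3) (ccm z45)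
      obtain ⟨w, hw⟩ := Option.ne_none_iff_exists'.mp
        (hnz (.inl 4) (.inr (.inl u)) (by simp) (by show ¬ ((4 : Fin 5) = 0); decide))
      rw [hw] at t1 t2 t3
      rw [pinA1 (memAnn _ _ t1) (memAnn _ _ t2) (memAnn _ _ t3)] at hw
      exact hw
    -- step 5 : a3 · u = a2
    have s5 : ∀ u : U, m' (some (.inl 2)) (some (.inr (.inl u))) = some (.inl 1) := by
      intro u
      have t1 := kill (.inl 2) (.inr (.inl u)) (.inl 0) (ccm (zu u))
      have t2 := kill2 (.inl 2) (.inr (.inl u)) (.inl 1) (ccm z23)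
      have t3 := killvia (.inl 2) (.inr (.inl u)) (.inl 4) (.inl 0) (ccm (s4 u)) (ccm z13)
      obtain ⟨w, hw⟩ := Option.ne_none_iff_exists'.mp
        (hnz (.inl 2) (.inr (.inl u)) (by simp) (by show ¬ ((2 : Fin 5) = 0); decide))
      rw [hw] at t1 t2 t3
      rw [pinA2 (memAnn _ _ t1) (memAnn _ _ t2) (memAnn _ _ t3)] at hw
      exact hw
    -- step 6 : a3 · v = a1
    have s6 : ∀ v : V, m' (some (.inl 2)) (some (.inr (.inr v))) = some (.inl 0) := by
      intro v
      have t1 := kill2 (.inl 2) (.inr (.inr v)) (.inl 0) (ccm z13)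
      have t2 := kill (.inl 2) (.inr (.inr v)) (.inl 1) (ccm (zv v))
      have t3 := killvia (.inl 2) (.inr (.inr v)) (.inl 3) (.inl 1) (ccm (s3 v)) (ccm z23)
      obtain ⟨w, hw⟩ := Option.ne_none_iff_exists'.mp
        (hnz (.inl 2) (.inr (.inr v)) (by simp) (by show ¬ ((2 : Fin 5) = 1); decide))
      rw [hw] at t1 t2 t3
      rw [pinA1 (memAnn _ _ t1) (memAnn _ _ t2) (memAnn _ _ t3)] at hw
      exact hw
    -- step 7 : a3 · a3 = 0
    have s7 : m' (some (.inl 2)) (some (.inl 2)) = none := by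
      by_contra hcon
      obtain ⟨w, hw⟩ := Option.ne_none_iff_exists'.mp hcon
      have t1 := kill (.inl 2) (.inl 2) (.inl 0) (ccm z13)
      have t2 := kill (.inl 2) (.inl 2) (.inl 1) (ccm z23)
      have t3 := killvia (.inl 2) (.inl 2) (.inl 3) (.inl 1) s1 (ccm z23)
      have t4 := killvia (.inl 2) (.inl 2) (.inl 4) (.inl 0) s2 (ccm z13)
      rw [hw] at t1 t2 t3 t4
      exact pin0 (memAnn _ _ t1) (memAnn _ _ t2) (memAnn _ _ t3) (memAnn _ _ t4)
    -- step 8 : a1 · x2 = a1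
    have s8 : m' (some (.inl 0)) (some (.inl 4)) = some (.inl 0) := by
      have t1 := kill (.inl 0) (.inl 4) (.inl 1) (ccm z25)
      have t2 := kill2 (.inl 0) (.inl 4) (.inl 2) z13
      have t3 := kill2 (.inl 0) (.inl 4) (.inl 3) z14
      obtain ⟨w, hw⟩ := Option.ne_none_iff_exists'.mp
        (hnz (.inl 0) (.inl 4) (by simp) (by show ¬ baseAdj 0 4; decide))
      rw [hw] at t1 t2 t3
      rw [pinP8 (memAnn _ _ t1) (memAnn _ _ t2) (memAnn _ _ t3)] at hw
      exact hw
    -- step 9 : a2 · x1 = a2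
    have s9 : m' (some (.inl 1)) (some (.inl 3)) = some (.inl 1) := by
      have t1 := kill (.inl 1) (.inl 3) (.inl 0) (ccm z14)
      have t2 := kill2 (.inl 1) (.inl 3) (.inl 2) z23
      have t3 := kill2 (.inl 1) (.inl 3) (.inl 4) z25
      obtain ⟨w, hw⟩ := Option.ne_none_iff_exists'.mp
        (hnz (.inl 1) (.inl 3) (by simp) (by show ¬ baseAdj 1 3; decide))
      rw [hw] at t1 t2 t3
      rw [pinP9 (memAnn _ _ t1) (memAnn _ _ t2) (memAnn _ _ t3)] at hw
      exact hw
    -- step 10 : a1 · v = a1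
    have s10 : ∀ v : V, m' (some (.inl 0)) (some (.inr (.inr v))) = some (.inl 0) := by
      intro v
      have t1 := kill (.inl 0) (.inr (.inr v)) (.inl 1) (ccm (zv v))
      have t2 := kill2 (.inl 0) (.inr (.inr v)) (.inl 2) z13
      have t3 := kill2 (.inl 0) (.inr (.inr v)) (.inl 3) z14
      obtain ⟨w, hw⟩ := Option.ne_none_iff_exists'.mp
        (hnz (.inl 0) (.inr (.inr v)) (by simp) (by show ¬ ((0 : Fin 5) = 1); decide))
      rw [hw] at t1 t2 t3
      rw [pinP8 (memAnn _ _ t1) (memAnn _ _ t2) (memAnn _ _ t3)] at hw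
      exact hw
    -- step 11 : a2 · u = a2
    have s11 : ∀ u : U, m' (some (.inl 1)) (some (.inr (.inl u))) = some (.inl 1) := by
      intro u
      have t1 := kill (.inl 1) (.inr (.inl u)) (.inl 0) (ccm (zu u))
      have t2 := kill2 (.inl 1) (.inr (.inl u)) (.inl 2) z23
      have t3 := kill2 (.inl 1) (.inr (.inl u)) (.inl 4) z25
      obtain ⟨w, hw⟩ := Option.ne_none_iff_exists'.mp
        (hnz (.inl 1) (.inr (.inl u)) (by simp) (by show ¬ ((1 : Fin 5) = 0); decide))
      rw [hw] at t1 t2 t3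
      rw [pinP9 (memAnn _ _ t1) (memAnn _ _ t2) (memAnn _ _ t3)] at hw
      exact hw
    -- step 12 : x1 · u = x1
    have s12 : ∀ u : U, m' (some (.inl 3)) (some (.inr (.inl u))) = some (.inl 3) := by
      intro u
      have t1 := kill (.inl 3) (.inr (.inl u)) (.inl 0) (ccm (zu u))
      have t2 := kill2 (.inl 3) (.inr (.inl u)) (.inl 4) z45
      have he : m' (m' (some (.inl 3)) (some (.inr (.inl u)))) (some (.inl 2)) =
          some (.inl 1) :=
        (eqvia (.inl 3) (.inr (.inl u)) (.inl 2) (.inl 1) (ccm (s5 u))).trans (ccm s9)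
      cases ht : m' (some (.inl 3)) (some (.inr (.inl u))) with
      | none => rw [ht, hz] at he; simp at he
      | some w =>
        rw [ht] at t1 t2 he
        rcases pin2 (memAnn _ _ t1) (memAnn _ _ t2) with h | h
        · rw [h, z23] at he; simp at he
        · rw [h]
    -- step 13 : x2 · v = x2
    have s13 : ∀ v : V, m' (some (.inl 4)) (some (.inr (.inr v))) = some (.inl 4) := by
      intro v
      have t1 := kill (.inl 4) (.inr (.inr v)) (.inl 1) (ccm (zv v))
      have t2 := kill2 (.inl 4) (.inr (.inr v)) (.inl 3) (ccm z45)
      have he : m' (m' (some (.inl 4)) (some (.inr (.inr v)))) (some (.inl 2)) =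
          some (.inl 0) :=
        (eqvia (.inl 4) (.inr (.inr v)) (.inl 2) (.inl 0) (ccm (s6 v))).trans (ccm s8)
      cases ht : m' (some (.inl 4)) (some (.inr (.inr v))) with
      | none => rw [ht, hz] at he; simp at he
      | some w =>
        rw [ht] at t1 t2 he
        rcases pin2' (memAnn _ _ t1) (memAnn _ _ t2) with h | h
        · rw [h, z13] at he; simp at he
        · rw [h]
    -- step 14 : x1 · x1 = x1
    have s14 : m' (some (.inl 3)) (some (.inl 3)) = some (.inl 3) := by
      have t1 := kill (.inl 3) (.inl 3) (.inl 0) (ccm z14)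
      have t2 := kill (.inl 3) (.inl 3) (.inl 4) z45
      have he : m' (m' (some (.inl 3)) (some (.inl 3))) (some (.inl 2)) =
          some (.inl 1) :=
        (eqvia (.inl 3) (.inl 3) (.inl 2) (.inl 1) (ccm s1)).trans (ccm s9)
      cases ht : m' (some (.inl 3)) (some (.inl 3)) with
      | none => rw [ht, hz] at he; simp at he
      | some w =>
        rw [ht] at t1 t2 he
        rcases pin2 (memAnn _ _ t1) (memAnn _ _ t2) with h | h
        · rw [h, z23] at he; simp at he
        · rw [h]
    -- step 15 : x2 · x2 = x2
    have s15 : m' (some (.inl 4)) (some (.inl 4)) = some (.inl 4) := by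
      have t1 := kill (.inl 4) (.inl 4) (.inl 1) (ccm z25)
      have t2 := kill (.inl 4) (.inl 4) (.inl 3) (ccm z45)
      have he : m' (m' (some (.inl 4)) (some (.inl 4))) (some (.inl 2)) =
          some (.inl 0) :=
        (eqvia (.inl 4) (.inl 4) (.inl 2) (.inl 0) (ccm s2)).trans (ccm s8)
      cases ht : m' (some (.inl 4)) (some (.inl 4)) with
      | none => rw [ht, hz] at he; simp at he
      | some w =>
        rw [ht] at t1 t2 he
        rcases pin2' (memAnn _ _ t1) (memAnn _ _ t2) with h | h
        · rw [h, z13] at he; simp at he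
        · rw [h]
    -- step 16 : u · u' = x1
    have s16 : ∀ u u' : U,
        m' (some (.inr (.inl u))) (some (.inr (.inl u'))) = some (.inl 3) := by
      intro u u'
      have t1 := kill (.inr (.inl u)) (.inr (.inl u')) (.inl 0) (ccm (zu u'))
      have t2 := killvia (.inr (.inl u)) (.inr (.inl u')) (.inl 4) (.inl 0)
        (ccm (s4 u')) (ccm (zu u))
      have he : m' (m' (some (.inr (.inl u))) (some (.inr (.inl u')))) (some (.inl 2)) =
          some (.inl 1) :=
        (eqvia (.inr (.inl u)) (.inr (.inl u')) (.inl 2) (.inl 1) (ccm (s5 u'))).trans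
          (ccm (s11 u))
      cases ht : m' (some (.inr (.inl u))) (some (.inr (.inl u'))) with
      | none => rw [ht, hz] at he; simp at he
      | some w =>
        rw [ht] at t1 t2 he
        rcases pin2 (memAnn _ _ t1) (memAnn _ _ t2) with h | h
        · rw [h, z23] at he; simp at he
        · rw [h]
    -- step 17 : v · v' = x2
    have s17 : ∀ v v' : V,
        m' (some (.inr (.inr v))) (some (.inr (.inr v'))) = some (.inl 4) := by
      intro v v'
      have t1 := kill (.inr (.inr v)) (.inr (.inr v')) (.inl 1) (ccm (zv v'))
      have t2 := killvia (.inr (.inr v)) (.inr (.inr v')) (.inl 3) (.inl 1)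
        (ccm (s3 v')) (ccm (zv v))
      have he : m' (m' (some (.inr (.inr v))) (some (.inr (.inr v')))) (some (.inl 2)) =
          some (.inl 0) :=
        (eqvia (.inr (.inr v)) (.inr (.inr v')) (.inl 2) (.inl 0) (ccm (s6 v'))).trans
          (ccm (s10 v))
      cases ht : m' (some (.inr (.inr v))) (some (.inr (.inr v'))) with
      | none => rw [ht, hz] at he; simp at he
      | some w =>
        rw [ht] at t1 t2 he
        rcases pin2' (memAnn _ _ t1) (memAnn _ _ t2) with h | h
        · rw [h, z13] at he; simp at he
        · rw [h]
    -- step 18 : u · v = a3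
    have s18 : ∀ (u : U) (v : V),
        m' (some (.inr (.inl u))) (some (.inr (.inr v))) = some (.inl 2) := by
      intro u v
      have t1 := kill2 (.inr (.inl u)) (.inr (.inr v)) (.inl 0) (ccm (zu u))
      have t2 := kill (.inr (.inl u)) (.inr (.inr v)) (.inl 1) (ccm (zv v))
      have he1 : m' (m' (some (.inr (.inl u))) (some (.inr (.inr v)))) (some (.inl 3)) =
          some (.inl 1) :=
        (eqvia (.inr (.inl u)) (.inr (.inr v)) (.inl 3) (.inl 1) (ccm (s3 v))).trans
          (ccm (s11 u))
      have he2 : m' (m' (some (.inr (.inl u))) (some (.inr (.inr v)))) (some (.inl 4)) =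
          some (.inl 0) :=
        (eqvia (.inr (.inl u)) (.inr (.inr v)) (.inl 4) (.inl 4) (ccm (s13 v))).trans
          (ccm (s4 u))
      cases ht : m' (some (.inr (.inl u))) (some (.inr (.inr v))) with
      | none => rw [ht, hz] at he1; simp at he1
      | some w =>
        rw [ht] at t1 t2 he1 he2
        rcases pin3 (memAnn _ _ t1) (memAnn _ _ t2) with h | h | h
        · rw [h, z14] at he1; simp at he1
        · rw [h, z25] at he2; simp at he2
        · rw [h]
    -- step 19 : a1 · a1 = 0
    have s19 : m' (some (.inl 0)) (some (.inl 0)) = none := by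
      rw [← s2, ha, s2, ccm s8, ccm z13]
    -- step 20 : a2 · a2 = 0
    have s20 : m' (some (.inl 1)) (some (.inl 1)) = none := by
      rw [← s1, ha, s1, ccm s9, ccm z23]
    -- assemble
    funext a b
    rcases a with _ | p
    · rw [hz]; exact (mz b).symm
    rcases b with _ | q
    · rw [hz']; exact (mz' (some p)).symm
    rcases p with i | u | v
    · rcases q with j | u' | v'
      · fin_cases i <;> fin_cases j
        exacts [s19, z12, z13, z14, s8,
          ccm z12, s20, z23, s9, z25,
          ccm z13, ccm z23, s7, s1, s2,
          ccm z14, ccm s9, ccm s1, s14, z45,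
          ccm s8, ccm z25, ccm s2, ccm z45, s15]
      · fin_cases i
        exacts [zu u', s11 u', s5 u', s12 u', s4 u']
      · fin_cases i
        exacts [s10 v', zv v', s6 v', s3 v', s13 v']
    · rcases q with j | u' | v'
      · fin_cases j
        exacts [ccm (zu u), ccm (s11 u), ccm (s5 u), ccm (s12 u), ccm (s4 u)]
      · exact s16 u u'
      · exact s18 u v'
    · rcases q with j | u' | v'
      · fin_cases j
        exacts [ccm (s10 v), ccm (zv v), ccm (s6 v), ccm (s3 v), ccm (s13 v)]
      · exact ccm (s18 u' v)
      · exact s17 v v'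
end

section
/- Let S be a commutative semigroup with zero whose zero-divisor graph Γ(S) contains a cycle. Let x be a vertex of Γ(S) that is not an end vertex, and let T_x be the set of end vertices of Γ(S) adjacent to x. If x·x ≠ 0, then T_x ∪ {0} is a sub-semigroup of S. -/
universe u v w
lemma zmul' {S : Type u} [CommSemigroupWithZero S] (a : S) : (0 : S) * a = 0 :=
  CommSemigroupWithZero.zero_mul' a

lemma mulz' {S : Type u} [CommSemigroupWithZero S] (a : S) : a * (0 : S) = 0 := by
  rw [mul_comm]; exact zmul' a

/-- Proposition 2.7: if `Γ(S)` has a cycle, `x` is a vertex which is not an end vertex,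
and `x * x ≠ 0`, then `T_x ∪ {0}` (where `T_x` is the set of end vertices adjacent to `x`)
is a sub-semigroup of `S`. -/
theorem stmt8 (S : Type u) [CommSemigroupWithZero S] (x : S)
    (hx : IsVertex S x) (hxe : ¬ IsEndVertex S x)
    (hcyc : ¬ (zdGraph S).IsAcyclic)
    (hx2 : x * x ≠ 0) :
    ∀ a ∈ {y : S | IsEndVertex S y ∧ (zdGraph S).Adj x y} ∪ {0},
      ∀ b ∈ {y : S | IsEndVertex S y ∧ (zdGraph S).Adj x y} ∪ {0},
        a * b ∈ {y : S | IsEndVertex S y ∧ (zdGraph S).Adj x y} ∪ {0} := by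
  -- the unique neighbour of an end vertex adjacent to x is x itself
  have uniq : ∀ {a z : S}, IsEndVertex S a → (zdGraph S).Adj x a →
      (zdGraph S).Adj a z → z = x := by
    rintro a z ⟨y, _, hy⟩ hxa haz
    have h1 : z = y := hy z haz
    have h2 : x = y := hy x hxa.symm
    rw [h1, ← h2]
  rintro a (⟨hae, hxa⟩ | ha0) b (⟨hbe, hxb⟩ | hb0)
  · -- main case: a, b ∈ T_x
    have hxa0 : x * a = 0 := hxa.2.1
    have hx0 : x ≠ 0 := hxa.2.2.1
    have ha0 : a ≠ 0 := hxa.2.2.2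
    have hxb0 : x * b = 0 := hxb.2.1
    have hb0 : b ≠ 0 := hxb.2.2.2
    by_cases hab : a * b = 0
    · right; simpa using hab
    · left
      have hxab0 : x * (a * b) = 0 := by rw [← mul_assoc, hxa0, zmul']
      have hxab : x ≠ a * b := fun h => hx2 (by rw [← h] at hxab0; exact hxab0)
      have hadjxab : (zdGraph S).Adj x (a * b) := ⟨hxab, hxab0, hx0, hab⟩
      refine ⟨⟨x, hadjxab.symm, ?_⟩, hadjxab⟩
      -- uniqueness: any neighbour c of a*b equals x
      rintro c ⟨hne, habc, _, hc0⟩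
      by_cases hac : a * c = 0
      · by_cases hca : c = a
        · rw [hca] at habc hne
          have : (zdGraph S).Adj a (a * b) := by
            refine ⟨fun h => hne h.symm, ?_, ha0, hab⟩
            rw [mul_comm a (a * b)]; exact habc
          exact absurd (uniq hae hxa this).symm hxab
        · exact uniq hae hxa ⟨fun h => hca h.symm, hac, ha0, hc0⟩
      · have hbac : b * (a * c) = 0 := by
          calc b * (a * c) = a * b * c := by ac_rfl
            _ = 0 := habc
        by_cases hacb : a * c = b
        · have hbb : b * b = 0 := by rw [← hacb] at hbac ⊢; exact hbac
          by_cases hbc : b * c = 0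
          · by_cases hcb : c = b
            · rw [hcb] at habc hne
              have : (zdGraph S).Adj b (a * b) := by
                refine ⟨fun h => hne h.symm, ?_, hb0, hab⟩
                rw [mul_comm b (a * b)]; exact habc
              exact absurd (uniq hbe hxb this).symm hxab
            · exact uniq hbe hxb ⟨fun h => hcb h.symm, hbc, hb0, hc0⟩
          · by_cases hbca : b * c = a
            · exfalso
              apply hab
              calc a * b = (b * c) * (a * c) := by rw [hbca, hacb]
                _ = (a * b * c) * c := by ac_rfl
                _ = 0 := by rw [habc, zmul']
            · have habc' : a * (b * c) = 0 := by rw [← mul_assoc]; exact habc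
              have hbcx : b * c = x :=
                uniq hae hxa ⟨fun h => hbca h.symm, habc', ha0, hbc⟩
              exfalso
              apply hx2
              calc x * x = (b * c) * (b * c) := by rw [hbcx]
                _ = (b * b) * (c * c) := by ac_rfl
                _ = 0 := by rw [hbb, zmul']
        · have hacx : a * c = x := uniq hbe hxb ⟨fun h => hacb h.symm, hbac, hb0, hac⟩
          by_cases hbc : b * c = 0
          · by_cases hcb : c = b
            · rw [hcb] at habc hne
              have : (zdGraph S).Adj b (a * b) := by
                refine ⟨fun h => hne h.symm, ?_, hb0, hab⟩
                rw [mul_comm b (a * b)]; exact habc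
              exact absurd (uniq hbe hxb this).symm hxab
            · exact uniq hbe hxb ⟨fun h => hcb h.symm, hbc, hb0, hc0⟩
          · by_cases hbca : b * c = a
            · have haa : a * a = 0 := by
                have : a * (b * c) = 0 := by rw [← mul_assoc]; exact habc
                rw [hbca] at this; exact this
              exfalso
              apply hx2
              calc x * x = (a * c) * (a * c) := by rw [hacx]
                _ = (a * a) * (c * c) := by ac_rfl
                _ = 0 := by rw [haa, zmul']
            · have habc' : a * (b * c) = 0 := by rw [← mul_assoc]; exact habc
              have hbcx : b * c = x :=
                uniq hae hxa ⟨fun h => hbca h.symm, habc', ha0, hbc⟩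
              exfalso
              apply hx2
              calc x * x = (a * c) * (b * c) := by rw [hacx, hbcx]
                _ = (a * b * c) * c := by ac_rfl
                _ = 0 := by rw [habc, zmul']
  · right; simp only [Set.mem_singleton_iff] at hb0 ⊢; rw [hb0, mulz']
  · right; simp only [Set.mem_singleton_iff] at ha0 ⊢; rw [ha0, zmul']
  · right; simp only [Set.mem_singleton_iff] at hb0 ⊢; rw [hb0, mulz']
end

section
/- Let S be a Boolean semigroup with zero element 0 (a commutative semigroup with zero in which x·x = x for all x). For a nonzero x ∈ S, let N(x) = {z ∈ S : z ≠ 0, z ≠ x, z·x = 0}, S_x = {y ∈ S : y ≠ 0 and N(y) = N(x)}, and S_{≤x} = {y ∈ S : y ≠ 0 and N(y) ⊆ N(x)}. Then S_{≤x} is a sub-semigroup of S with 0 ∉ S_{≤x}, and S_x is an ideal of S_{≤x}: for all y ∈ S_x and z ∈ S_{≤x}, y·z ∈ S_x. -/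
universe u v w
/-- The neighbourhood of `x` in the zero-divisor graph of `S`. -/
def Nset (S : Type u) [CommSemigroupWithZero S] (x : S) : Set S :=
  {z : S | z ≠ 0 ∧ z ≠ x ∧ z * x = 0}

/-- Theorem 3.2(2): in a Boolean semigroup `S`, for nonzero `x` the set
`S_{≤x} = {y ≠ 0 | N(y) ⊆ N(x)}` is a sub-semigroup of `S` not containing `0`, and
`S_x = {y ≠ 0 | N(y) = N(x)}` is an ideal of `S_{≤x}`. -/
theorem stmt14 (S : Type u) [CommSemigroupWithZero S] (hB : ∀ x : S, x * x = x)
    (x : S) (hx : x ≠ 0) :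
    (∀ y ∈ {y : S | y ≠ 0 ∧ Nset S y ⊆ Nset S x},
      ∀ z ∈ {y : S | y ≠ 0 ∧ Nset S y ⊆ Nset S x},
        y * z ∈ {y : S | y ≠ 0 ∧ Nset S y ⊆ Nset S x}) ∧
    (0 : S) ∉ {y : S | y ≠ 0 ∧ Nset S y ⊆ Nset S x} ∧
    (∀ y ∈ {y : S | y ≠ 0 ∧ Nset S y = Nset S x},
      ∀ z ∈ {y : S | y ≠ 0 ∧ Nset S y ⊆ Nset S x},
        y * z ∈ {y : S | y ≠ 0 ∧ Nset S y = Nset S x}) := by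
  -- key lemma: product of two elements of S_{≤x} is nonzero
  have key : ∀ y z : S, y ≠ 0 → z ≠ 0 → Nset S y ⊆ Nset S x → Nset S z ⊆ Nset S x →
      y * z ≠ 0 ∧ Nset S (y * z) ⊆ Nset S x := by
    intro y z hy0 hz0 hy hz
    have hne : y * z ≠ 0 := by
      intro h
      by_cases hyz : y = z
      · rw [hyz, hB] at h; exact hz0 h
      · have hzNy : z ∈ Nset S y := ⟨hz0, fun e => hyz e.symm, by rwa [mul_comm]⟩
        have hyNz : y ∈ Nset S z := ⟨hy0, hyz, h⟩
        have hzx := hy hzNy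
        have hyx := hz hyNz
        have hxNy : x ∈ Nset S y := ⟨hx, fun e => hyx.2.1 e.symm, by
          rw [mul_comm]; exact hyx.2.2⟩
        exact (hy hxNy).2.1 rfl
    refine ⟨hne, ?_⟩
    rintro w ⟨hw0, hwyz, hw⟩
    by_cases hwy : w * y = 0
    · have hwny : w ≠ y := by
        intro e; rw [e, hB] at hwy; exact hy0 hwy
      exact hy ⟨hw0, hwny, hwy⟩
    · -- w*y ≠ 0; then w*y ∈ N(z) ⊆ N(x), so w*y*x = 0
      have huz : (w * y) * z = 0 := by rw [mul_assoc]; exact hw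
      have hunz : w * y ≠ z := by
        intro e; rw [e, hB] at huz; exact hz0 huz
      have hu := hz ⟨hwy, hunz, huz⟩
      -- hu.2.2 : (w*y)*x = 0
      by_cases hwx : w * x = 0
      · have hwnx : w ≠ x := by
          intro e; rw [e, hB] at hwx; exact hx hwx
        exact ⟨hw0, hwnx, hwx⟩
      · exfalso
        have hvy : (w * x) * y = 0 := by
          rw [mul_assoc, mul_comm x y, ← mul_assoc]
          exact hu.2.2
        have hvny : w * x ≠ y := by
          intro e; rw [e, hB] at hvy; exact hy0 hvy
        have hv := hy ⟨hwx, hvny, hvy⟩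
        -- hv.2.2 : (w*x)*x = 0, but (w*x)*x = w*x ≠ 0
        have hvv := hv.2.2
        rw [mul_assoc, hB] at hvv
        exact hwx hvv
  refine ⟨?_, ?_, ?_⟩
  · rintro y ⟨hy0, hy⟩ z ⟨hz0, hz⟩
    exact key y z hy0 hz0 hy hz
  · rintro ⟨h, -⟩; exact h rfl
  · rintro y ⟨hy0, hy⟩ z ⟨hz0, hz⟩
    obtain ⟨hne, hsub⟩ := key y z hy0 hz0 (le_of_eq hy) hz
    refine ⟨hne, Set.Subset.antisymm hsub ?_⟩
    intro w hwx
    rw [← hy] at hwx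
    obtain ⟨hw0, hwy, hwy0⟩ := hwx
    refine ⟨hw0, ?_, ?_⟩
    · intro e
      have : w * y = w := by
        rw [e, mul_assoc, mul_comm z y, ← mul_assoc, hB]
      rw [hwy0] at this; exact hw0 this.symm
    · rw [← mul_assoc, hwy0, CommSemigroupWithZero.zero_mul']
end

section
/- Let S be a Boolean semigroup with zero element 0 (a commutative semigroup with zero in which x·x = x for all x), and for x ∈ S let N(x) = {z ∈ S : z ≠ 0, z ≠ x, z·x = 0}. Then the following are equivalent: (i) for all nonzero x, y ∈ S, N(x) = N(y) implies x = y (the zero-divisor graph of S is uniquely determined); (ii) for all nonzero x, y ∈ S, N(y) ⊆ N(x) implies y·x = x. -/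
universe u v w
/-- Corollary 3.3: for a Boolean semigroup `S`, the zero-divisor graph `Γ(S)` is uniquely
determined (by neighbourhoods) iff `N(y) ⊆ N(x)` implies `y * x = x` for all nonzero
`x, y ∈ S`. -/
theorem stmt15 (S : Type u) [CommSemigroupWithZero S] (hB : ∀ x : S, x * x = x) :
    (∀ x y : S, x ≠ 0 → y ≠ 0 → Nset S x = Nset S y → x = y) ↔
    (∀ x y : S, x ≠ 0 → y ≠ 0 → Nset S y ⊆ Nset S x → y * x = x) := by
  constructor
  · intro h x y hx hy hsub
    by_cases hxy : x * y = 0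
    · by_cases hxey : x = y
      · subst hxey; exact hB x
      · have hxN : x ∈ Nset S y := ⟨hx, hxey, hxy⟩
        have hxx : x * x = 0 := (hsub hxN).2.2
        exact absurd ((hB x).symm.trans hxx) hx
    · set w := x * y with hwdef
      have hw : w ≠ 0 := hxy
      have hwx : w * x = w := by rw [hwdef, mul_right_comm, hB]
      have hNeq : Nset S x = Nset S w := by
        ext z
        constructor
        · rintro ⟨hz0, hzx, hzx0⟩
          refine ⟨hz0, ?_, ?_⟩
          · rintro rfl
            exact hw (hwx.symm.trans hzx0)
          · calc z * w = z * x * y := by rw [hwdef, mul_assoc]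
              _ = 0 := by rw [hzx0, CommSemigroupWithZero.zero_mul']
        · rintro ⟨hz0, hzw, hzw0⟩
          have hzx0 : z * x = 0 := by
            by_contra hzx
            have h1 : z * x * y = 0 := by rw [mul_assoc, ← hwdef, hzw0]
            have h2 : z * x ≠ y := by
              rintro h2
              rw [h2] at h1
              exact hy ((hB y).symm.trans h1)
            have := (hsub ⟨hzx, h2, h1⟩).2.2
            rw [mul_assoc, hB] at this
            exact hzx this
          refine ⟨hz0, ?_, hzx0⟩
          rintro rfl
          have : z * w = w := by rw [hwdef, ← mul_assoc, hB]
          exact hw (this.symm.trans hzw0)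
      have := h x w hx hw hNeq
      rw [mul_comm]
      exact (this.trans hwdef).symm
  · intro h x y hx hy heq
    have h1 : y * x = x := h x y hx hy (le_of_eq heq.symm)
    have h2 : x * y = y := h y x hy hx (le_of_eq heq)
    rw [← h1, mul_comm, h2]
end

section
/- Let S be a commutative semigroup with zero in which every element is a zero-divisor (for every x ∈ S there exists a nonzero y ∈ S with x·y = 0) and which is reduced (x·x = 0 implies x = 0, equivalently S has no nonzero nilpotent elements). For x ∈ S let N(x) = {z ∈ S : z ≠ 0, z ≠ x, z·x = 0}. If the zero-divisor graph of S is uniquely determined, i.e., N(x) = N(y) implies x = y for all nonzero x, y ∈ S, then S is a Boolean semigroup: x·x = x for every x ∈ S. -/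
universe u v w
/-- Proposition 3.6: a reduced commutative semigroup with zero all of whose elements are
zero-divisors, whose zero-divisor graph is uniquely determined, is a Boolean semigroup. -/
theorem stmt18 (S : Type u) [CommSemigroupWithZero S]
    (hzd : ∀ x : S, ∃ y : S, y ≠ 0 ∧ x * y = 0)
    (hred : ∀ x : S, x * x = 0 → x = 0)
    (hud : ∀ x y : S, x ≠ 0 → y ≠ 0 → Nset S x = Nset S y → x = y) :
    ∀ x : S, x * x = x := by
  intro x
  by_cases hx : x = 0
  · subst hx; exact CommSemigroupWithZero.zero_mul' 0
  have hz0 : ∀ a : S, a * 0 = 0 := fun a => by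
    rw [mul_comm]; exact CommSemigroupWithZero.zero_mul' a
  have hx2 : x * x ≠ 0 := fun h => hx (hred x h)
  have key : ∀ z : S, z * (x * x) = 0 ↔ z * x = 0 := by
    intro z
    constructor
    · intro h
      apply hred
      have : (z * x) * (z * x) = z * (z * (x * x)) := by
        rw [mul_assoc, mul_comm x (z * x), mul_assoc z x x]
      rw [this, h, hz0]
    · intro h
      rw [← mul_assoc, h, CommSemigroupWithZero.zero_mul']
  have hsq : (x * x) * x ≠ 0 := by
    intro h
    apply hx2
    apply hred
    rw [show (x * x) * (x * x) = ((x * x) * x) * x from (mul_assoc _ _ _).symm, h, CommSemigroupWithZero.zero_mul']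
  have hNs : Nset S x = Nset S (x * x) := by
    ext z
    simp only [Nset, Set.mem_setOf_eq]
    constructor
    · rintro ⟨hz, hzx, hm⟩
      refine ⟨hz, ?_, (key z).mpr hm⟩
      rintro rfl
      exact hsq hm
    · rintro ⟨hz, hzx, hm⟩
      refine ⟨hz, ?_, (key z).mp hm⟩
      rintro rfl
      exact hsq (by rw [mul_assoc]; exact hm)
  exact (hud x (x * x) hx hx2 hNs).symm
end
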